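/- Suppose a_p ≠ a_m. For λ ∈ ℂ \ {0}, the following are equivalent: (a) (K_m J_p − K_p J_m)(K_m' J_p − K_p' J_m) + (K_m K_p' − K_m' K_p)² = 0; (b) (λ − λ⁻¹)² = 4 p² sinh²(2γ); (c) λ = λ(s₁, s₂) for some (s₁, s₂) ∈ {−1, +1}². -/

import Mathlib

noncomputable section
open Complex Matrix

/-- `K_* = p λ − a_* e^{−2γ}`. -/
def Kc (γ p aS : ℝ) (lam : ℂ) : ℂ := (p : ℂ) * lam - (aS : ℂ) * (Real.exp (-(2 * γ)) : ℂ)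

/-- `K_*' = a_* e^{2γ} − p λ⁻¹`. -/
def Kc' (γ p aS : ℝ) (lam : ℂ) : ℂ := (aS : ℂ) * (Real.exp (2 * γ) : ℂ) - (p : ℂ) * lam⁻¹

/-- `J_* = λ − λ⁻¹ + 2 p a_* sinh(2γ)`. -/
def Jc (γ p aS : ℝ) (lam : ℂ) : ℂ :=
  lam - lam⁻¹ + 2 * (p : ℂ) * (aS : ℂ) * (Real.sinh (2 * γ) : ℂ)

/-- `λ(s₁, s₂) = s₁ p sinh(2γ) + s₂ √(1 + p² sinh²(2γ))`. -/
def lamSS (γ p s₁ s₂ : ℝ) : ℝ :=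
  s₁ * p * Real.sinh (2 * γ) + s₂ * Real.sqrt (1 + p ^ 2 * Real.sinh (2 * γ) ^ 2)

lemma lamSS_roots (γ p : ℝ) (s₁ : ℝ) (hs₁ : s₁ = 1 ∨ s₁ = -1) (lam : ℂ) (hlam : lam ≠ 0)
    (hx : lam - lam⁻¹ = ((s₁ * (2 * p * Real.sinh (2 * γ)) : ℝ) : ℂ)) :
    lam = ((lamSS γ p s₁ 1 : ℝ) : ℂ) ∨ lam = ((lamSS γ p s₁ (-1) : ℝ) : ℂ) := by
  have hs₁sq : s₁ ^ 2 = 1 := by rcases hs₁ with h | h <;> rw [h] <;> norm_num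
  have hD : (0 : ℝ) ≤ 1 + p ^ 2 * Real.sinh (2 * γ) ^ 2 := by positivity
  have hsq : Real.sqrt (1 + p ^ 2 * Real.sinh (2 * γ) ^ 2) ^ 2
      = 1 + p ^ 2 * Real.sinh (2 * γ) ^ 2 := Real.sq_sqrt hD
  have hsum : lamSS γ p s₁ 1 + lamSS γ p s₁ (-1) = s₁ * (2 * p * Real.sinh (2 * γ)) := by
    simp only [lamSS]; ring
  have hprod : lamSS γ p s₁ 1 * lamSS γ p s₁ (-1) = -1 := by
    simp only [lamSS]
    nlinarith [hsq, hs₁sq]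
  have hinv : lam * lam⁻¹ = 1 := mul_inv_cancel₀ hlam
  have hquad : lam ^ 2 - ((s₁ * (2 * p * Real.sinh (2 * γ)) : ℝ) : ℂ) * lam - 1 = 0 := by
    linear_combination lam * hx + hinv
  have hfac : (lam - ((lamSS γ p s₁ 1 : ℝ) : ℂ)) * (lam - ((lamSS γ p s₁ (-1) : ℝ) : ℂ)) = 0 := by
    have h1 : ((lamSS γ p s₁ 1 : ℝ) : ℂ) + ((lamSS γ p s₁ (-1) : ℝ) : ℂ)
        = ((s₁ * (2 * p * Real.sinh (2 * γ)) : ℝ) : ℂ) := by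
      rw [← Complex.ofReal_add, hsum]
    have h2 : ((lamSS γ p s₁ 1 : ℝ) : ℂ) * ((lamSS γ p s₁ (-1) : ℝ) : ℂ) = -1 := by
      rw [← Complex.ofReal_mul, hprod]; norm_num
    linear_combination hquad - lam * h1 + h2
  rcases mul_eq_zero.mp hfac with h | h
  · exact Or.inl (sub_eq_zero.mp h)
  · exact Or.inr (sub_eq_zero.mp h)

set_option maxHeartbeats 2000000 in
/-- For `a_p ≠ a_m`, condition (i) is equivalent to `(λ − λ⁻¹)² = 4 p² sinh²(2γ)`, which is
equivalent to `λ = λ(s₁, s₂)` for some signs. -/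
theorem condition_i_iff_lamSS (γ p : ℝ) (hp : p ∈ Set.Ioo (-1 : ℝ) 1) (q : ℂ)
    (hq : p ^ 2 + ‖q‖ ^ 2 = 1)
    (aP aM : ℝ) (haP : aP ∈ Set.Ioo (-1 : ℝ) 1) (haM : aM ∈ Set.Ioo (-1 : ℝ) 1)
    (bP bM : ℂ) (hbP : aP ^ 2 + ‖bP‖ ^ 2 = 1) (hbM : aM ^ 2 + ‖bM‖ ^ 2 = 1) (hap : aP ≠ aM) (lam : ℂ) (hlam : lam ≠ 0) :
    ((Kc γ p aM lam * Jc γ p aP lam - Kc γ p aP lam * Jc γ p aM lam) *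
        (Kc' γ p aM lam * Jc γ p aP lam - Kc' γ p aP lam * Jc γ p aM lam) +
        (Kc γ p aM lam * Kc' γ p aP lam - Kc' γ p aM lam * Kc γ p aP lam) ^ 2 = 0 ↔
      (lam - lam⁻¹) ^ 2 = ((4 * p ^ 2 * Real.sinh (2 * γ) ^ 2 : ℝ) : ℂ)) ∧
    ((lam - lam⁻¹) ^ 2 = ((4 * p ^ 2 * Real.sinh (2 * γ) ^ 2 : ℝ) : ℂ) ↔
      ∃ s₁ s₂ : ℝ, (s₁ = 1 ∨ s₁ = -1) ∧ (s₂ = 1 ∨ s₂ = -1) ∧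
        lam = ((lamSS γ p s₁ s₂ : ℝ) : ℂ)) := by
  constructor
  · -- part 1
    have hE0 : ((Real.exp (2 * γ) : ℝ) : ℂ) ≠ 0 :=
      Complex.ofReal_ne_zero.mpr (Real.exp_ne_zero _)
    have hEinv : ((Real.exp (-(2 * γ)) : ℝ) : ℂ) = ((Real.exp (2 * γ) : ℝ) : ℂ)⁻¹ := by
      rw [Real.exp_neg]; push_cast; ring
    have hsinh : ((Real.sinh (2 * γ) : ℝ) : ℂ)
        = (((Real.exp (2 * γ) : ℝ) : ℂ) - ((Real.exp (2 * γ) : ℝ) : ℂ)⁻¹) / 2 := by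
      rw [Real.sinh_eq, Real.exp_neg]; push_cast; ring
    have key : (Kc γ p aM lam * Jc γ p aP lam - Kc γ p aP lam * Jc γ p aM lam) *
        (Kc' γ p aM lam * Jc γ p aP lam - Kc' γ p aP lam * Jc γ p aM lam) +
        (Kc γ p aM lam * Kc' γ p aP lam - Kc' γ p aM lam * Kc γ p aP lam) ^ 2
        = -(((aP : ℂ) - (aM : ℂ)) ^ 2 * ((1 : ℂ) - (p : ℂ) ^ 2) *
            ((lam - lam⁻¹) ^ 2 - ((4 * p ^ 2 * Real.sinh (2 * γ) ^ 2 : ℝ) : ℂ))) := by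
      have hm : lam * lam⁻¹ = 1 := mul_inv_cancel₀ hlam
      have hEF : ((Real.exp (2 * γ) : ℝ) : ℂ) * ((Real.exp (2 * γ) : ℝ) : ℂ)⁻¹ = 1 :=
        mul_inv_cancel₀ hE0
      have h2s : ((Real.exp (2 * γ) : ℝ) : ℂ) - ((Real.exp (2 * γ) : ℝ) : ℂ)⁻¹
          = 2 * ((Real.sinh (2 * γ) : ℝ) : ℂ) := by rw [hsinh]; ring
      have hc4 : ((4 * p ^ 2 * Real.sinh (2 * γ) ^ 2 : ℝ) : ℂ)
          = 4 * (p : ℂ) ^ 2 * ((Real.sinh (2 * γ) : ℝ) : ℂ) ^ 2 := by push_cast; ring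
      simp only [Kc, Kc', Jc, hEinv, hc4]
      linear_combination (-(((aP : ℂ) - (aM : ℂ)) ^ 2)) * ((2 - 2 * (p : ℂ) ^ 2 - ((Real.exp (2 * γ) : ℝ) : ℂ)⁻¹ ^ 2 * (p : ℂ) ^ 2 + ((Real.exp (2 * γ) : ℝ) : ℂ)⁻¹ ^ 2 * (p : ℂ) ^ 4 - 2 * ((Real.exp (2 * γ) : ℝ) : ℂ) * ((Real.exp (2 * γ) : ℝ) : ℂ)⁻¹ + 4 * ((Real.exp (2 * γ) : ℝ) : ℂ) * ((Real.exp (2 * γ) : ℝ) : ℂ)⁻¹ * (p : ℂ) ^ 2 - 2 * ((Real.exp (2 * γ) : ℝ) : ℂ) * ((Real.exp (2 * γ) : ℝ) : ℂ)⁻¹ * (p : ℂ) ^ 4 - ((Real.exp (2 * γ) : ℝ) : ℂ) ^ 2 * (p : ℂ) ^ 2 + ((Real.exp (2 * γ) : ℝ) : ℂ) ^ 2 * (p : ℂ) ^ 4) * hm + (-2 + 2 * (p : ℂ) ^ 2 + lam⁻¹ ^ 2 - lam⁻¹ ^ 2 * (p : ℂ) ^ 2 + lam ^ 2 - lam ^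 2 * (p : ℂ) ^ 2) * hEF + (-2 * ((Real.sinh (2 * γ) : ℝ) : ℂ) * (p : ℂ) ^ 2 + 2 * ((Real.sinh (2 * γ) : ℝ) : ℂ) * (p : ℂ) ^ 4 + ((Real.exp (2 * γ) : ℝ) : ℂ)⁻¹ * (p : ℂ) ^ 2 - ((Real.exp (2 * γ) : ℝ) : ℂ)⁻¹ * (p : ℂ) ^ 4 - ((Real.exp (2 * γ) : ℝ) : ℂ) * (p : ℂ) ^ 2 + ((Real.exp (2 * γ) : ℝ) : ℂ) * (p : ℂ) ^ 4 + lam⁻¹ ^ 2 * ((Real.exp (2 * γ) : ℝ) : ℂ)⁻¹ * (p : ℂ) ^ 2 - 2 * lam * lam⁻¹ * ((Real.sinh (2 * γ) : ℝ) : ℂ) * (p : ℂ) ^ 4 - lam * lam⁻¹ * ((Real.exp (2 * γ) : ℝ) : ℂ)⁻¹ * (p : ℂ) ^ 2 + lam * lam⁻¹ * ((Real.exp (2 * γ) : ℝ) : ℂ)⁻¹ * (p : ℂ) ^ 4 + lam * lam⁻¹ * ((Real.exp (2 * γ) : ℝ) : ℂ) * (p : ℂ) ^ 2 - lam * lam⁻¹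 * ((Real.exp (2 * γ) : ℝ) : ℂ) * (p : ℂ) ^ 4 - lam ^ 2 * ((Real.exp (2 * γ) : ℝ) : ℂ) * (p : ℂ) ^ 2) * h2s)
    rw [key]
    have h1 : ((aP : ℂ) - (aM : ℂ)) ≠ 0 := by
      rw [sub_ne_zero]
      exact_mod_cast hap
    have h2 : ((1 : ℂ) - (p : ℂ) ^ 2) ≠ 0 := by
      have hr : (1 : ℝ) - p ^ 2 ≠ 0 := by nlinarith [hp.1, hp.2]
      have : (((1 : ℝ) - p ^ 2 : ℝ) : ℂ) ≠ 0 := Complex.ofReal_ne_zero.mpr hr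
      push_cast at this
      convert this using 1
    constructor
    · intro h
      have h0 := neg_eq_zero.mp h
      rcases mul_eq_zero.mp h0 with h' | h'
      · rcases mul_eq_zero.mp h' with h'' | h''
        · exact absurd ((pow_eq_zero_iff two_ne_zero).mp h'') h1
        · exact absurd h'' h2
      · exact sub_eq_zero.mp h'
    · intro h
      rw [sub_eq_zero.mpr h, mul_zero, neg_zero]
  · -- part 2
    constructor
    · intro h
      have hfac : ((lam - lam⁻¹) - ((2 * p * Real.sinh (2 * γ) : ℝ) : ℂ)) *
          ((lam - lam⁻¹) + ((2 * p * Real.sinh (2 * γ) : ℝ) : ℂ)) = 0 := by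
        have hc : ((4 * p ^ 2 * Real.sinh (2 * γ) ^ 2 : ℝ) : ℂ)
            = ((2 * p * Real.sinh (2 * γ) : ℝ) : ℂ) ^ 2 := by push_cast; ring
        linear_combination h + hc
      rcases mul_eq_zero.mp hfac with h' | h'
      · have hx : lam - lam⁻¹ = (((1 : ℝ) * (2 * p * Real.sinh (2 * γ)) : ℝ) : ℂ) := by
          rw [sub_eq_zero] at h'; rw [h']; push_cast; ring
        rcases lamSS_roots γ p 1 (Or.inl rfl) lam hlam hx with h'' | h''
        · exact ⟨1, 1, Or.inl rfl, Or.inl rfl, h''⟩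
        · exact ⟨1, -1, Or.inl rfl, Or.inr rfl, h''⟩
      · have hx : lam - lam⁻¹ = (((-1 : ℝ) * (2 * p * Real.sinh (2 * γ)) : ℝ) : ℂ) := by
          have : lam - lam⁻¹ = -((2 * p * Real.sinh (2 * γ) : ℝ) : ℂ) := by
            linear_combination h'
          rw [this]; push_cast; ring
        rcases lamSS_roots γ p (-1) (Or.inr rfl) lam hlam hx with h'' | h''
        · exact ⟨-1, 1, Or.inr rfl, Or.inl rfl, h''⟩
        · exact ⟨-1, -1, Or.inr rfl, Or.inr rfl, h''⟩
    · rintro ⟨s₁, s₂, hs₁, hs₂, rfl⟩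
      have hs₁sq : s₁ ^ 2 = 1 := by rcases hs₁ with h | h <;> rw [h] <;> norm_num
      have hs₂sq : s₂ ^ 2 = 1 := by rcases hs₂ with h | h <;> rw [h] <;> norm_num
      have hD : (0 : ℝ) ≤ 1 + p ^ 2 * Real.sinh (2 * γ) ^ 2 := by positivity
      have hsq : Real.sqrt (1 + p ^ 2 * Real.sinh (2 * γ) ^ 2) ^ 2
          = 1 + p ^ 2 * Real.sinh (2 * γ) ^ 2 := Real.sq_sqrt hD
      have hr : lamSS γ p s₁ s₂ ^ 2
          = s₁ * (2 * p * Real.sinh (2 * γ)) * lamSS γ p s₁ s₂ + 1 := by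
        simp only [lamSS]
        nlinarith [hsq, hs₁sq, hs₂sq]
      set L : ℂ := ((lamSS γ p s₁ s₂ : ℝ) : ℂ) with hL
      have hL0 : L ≠ 0 := by rwa [hL] at hlam ⊢
      have hrc : L ^ 2 = ((s₁ * (2 * p * Real.sinh (2 * γ)) : ℝ) : ℂ) * L + 1 := by
        rw [hL, ← Complex.ofReal_one, ← Complex.ofReal_mul, ← Complex.ofReal_add,
          ← Complex.ofReal_pow, hr]
      have hinv : L * L⁻¹ = 1 := mul_inv_cancel₀ hL0
      have hx : L - L⁻¹ = ((s₁ * (2 * p * Real.sinh (2 * γ)) : ℝ) : ℂ) := by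
        have h2 : L * (L - L⁻¹) = L * ((s₁ * (2 * p * Real.sinh (2 * γ)) : ℝ) : ℂ) := by
          linear_combination hrc - hinv
        exact mul_left_cancel₀ hL0 h2
      rw [hx]
      have hcs : ((s₁ : ℂ)) ^ 2 = 1 := by exact_mod_cast hs₁sq
      push_cast
      linear_combination (4 * (p : ℂ) ^ 2 * (Complex.sinh (2 * (γ : ℂ))) ^ 2) * hcs
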